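/- arXiv:1203.4324 — 2 statements merged into one kernel-verified Lean document; each statement's English description precedes it below -/
import Mathlib

section
/- If f is an incentive compatible social choice function from profiles of strict total orders on V onto V, and |V| ≥ 3, then f is a dictatorship: there exists an agent i such that for every preference profile, f outputs the top-ranked alternative of agent i. -/
set_option linter.unusedSectionVars false
set_option linter.unreachableTactic false
set_option linter.unusedTactic false
set_option maxHeartbeats 1000000

namespace GS

variable {V : Type} [Fintype V] [DecidableEq V]

abbrev Pref (V : Type) := {r : V → V → Prop // IsStrictTotalOrder V r}

/-- score-based strict total order: `val a b` means `b` is preferred over `a`.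
Ties in score broken by a canonical enumeration. -/
noncomputable def mk (s : V → ℕ) : Pref V :=
  ⟨fun a b => s a < s b ∨ (s a = s b ∧ (Fintype.equivFin V a : ℕ) < (Fintype.equivFin V b : ℕ)),
   by
    refine { trichotomous := ?_, irrefl := ?_, trans := ?_ }
    · -- trichotomous
      intro a b hab hba
      rcases Nat.lt_trichotomy (s a) (s b) with h | h | h
      · exact absurd (Or.inl h) hab
      · rcases Nat.lt_trichotomy ((Fintype.equivFin V a : ℕ)) ((Fintype.equivFin V b : ℕ)) with
          g | g | g
        · exact absurd (Or.inr ⟨h, g⟩) hab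
        · exact (Fintype.equivFin V).injective (Fin.ext g)
        · exact absurd (Or.inr ⟨h.symm, g⟩) hba
      · exact absurd (Or.inl h) hba
    · intro a
      rintro (h | ⟨h, h'⟩) <;> omega
    · intro a b c hab hbc
      rcases hab with h | ⟨h, h'⟩ <;> rcases hbc with g | ⟨g, g'⟩
      · exact Or.inl (by omega)
      · exact Or.inl (by omega)
      · exact Or.inl (by omega)
      · exact Or.inr ⟨by omega, by omega⟩⟩

lemma mk_lt {s : V → ℕ} {a b : V} (h : s a < s b) : (mk s).val a b := Or.inl h

lemma mk_imp (s t : V → ℕ) (w : V)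
    (h1 : ∀ v, s v < s w → t v < t w)
    (h2 : ∀ v, s v = s w → t v = t w ∨ t v < t w) :
    ∀ v, (mk s).val v w → (mk t).val v w := by
  intro v hv
  rcases hv with h | ⟨h, h'⟩
  · exact Or.inl (h1 v h)
  · rcases h2 v h with e | l
    · exact Or.inr ⟨e, h'⟩
    · exact Or.inl l

/-- x on top (2), y second (1), rest 0 -/
def s2 (x y v : V) : ℕ := if v = x then 2 else if v = y then 1 else 0

/-- x top (3), y (2), z (1), rest 0 -/
def s3 (x y z v : V) : ℕ := if v = x then 3 else if v = y then 2 else if v = z then 1 else 0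

/-- y on top (2), x at bottom (0), rest 1 -/
def sbt (x y v : V) : ℕ := if v = y then 2 else if v = x then 0 else 1

variable {n : ℕ} (f : (Fin n → Pref V) → V)

def SP : Prop := ∀ (θ : Fin n → Pref V) (i : Fin n) (p : Pref V),
    ¬ (θ i).val (f θ) (f (Function.update θ i p))

def Onto : Prop := ∀ v : V, ∃ θ, f θ = v

variable {f}

lemma sp2 (hsp : SP f) (θ : Fin n → Pref V) (i : Fin n) (p : Pref V) :
    ¬ p.val (f (Function.update θ i p)) (f θ) := by
  have hθ : Function.update (Function.update θ i p) i (θ i) = θ := by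
    funext j
    by_cases h : j = i
    · subst h; simp
    · simp [Function.update_of_ne h]
  have := hsp (Function.update θ i p) i (θ i)
  rw [hθ] at this
  simpa using this

lemma mon_step (hsp : SP f) {θ : Fin n → Pref V} {i : Fin n} {p : Pref V} {w : V}
    (hw : f θ = w) (h : ∀ v, (θ i).val v w → p.val v w) :
    f (Function.update θ i p) = w := by
  set y := f (Function.update θ i p) with hy
  have h1 : ¬ (θ i).val w y := by rw [← hw]; exact hsp θ i p
  have h2 : ¬ p.val y w := by
    have := sp2 hsp θ i p; rw [hw] at this; exact this
  haveI := (θ i).2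
  rcases trichotomous_of (θ i).val w y with h' | h' | h'
  · exact absurd h' h1
  · exact h'.symm
  · exact absurd (h y h') h2

lemma mon (hsp : SP f) {θ θ' : Fin n → Pref V} {w : V}
    (hw : f θ = w) (h : ∀ i v, (θ i).val v w → (θ' i).val v w) : f θ' = w := by
  have key : ∀ k : ℕ, f (fun j => if (j : ℕ) < k then θ' j else θ j) = w := by
    intro k
    induction k with
    | zero => simpa using hw
    | succ k ih =>
      by_cases hk : k < n
      · set i : Fin n := ⟨k, hk⟩ with hi
        have hupd : (fun j : Fin n => if (j : ℕ) < k + 1 then θ' j else θ j)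
            = Function.update (fun j : Fin n => if (j : ℕ) < k then θ' j else θ j) i (θ' i) := by
          funext j
          by_cases hj : j = i
          · subst hj; simp [hi]
          · have hjk : (j : ℕ) ≠ k := fun e => hj (by apply Fin.ext; simp [hi, e])
            have : ((j : ℕ) < k + 1) ↔ ((j : ℕ) < k) := by omega
            simp [Function.update_of_ne hj, this]
        rw [hupd]
        apply mon_step hsp ih
        intro v hv
        have hik : ¬ ((i : ℕ) < k) := by simp [hi]
        rw [if_neg hik] at hv
        exact h i v hv
      · have heq : (fun j : Fin n => if (j : ℕ) < k + 1 then θ' j else θ j)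
            = (fun j : Fin n => if (j : ℕ) < k then θ' j else θ j) := by
          funext j
          have := j.isLt
          have h1 : (j : ℕ) < k + 1 := by omega
          have h2 : (j : ℕ) < k := by omega
          simp [h1, h2]
        rw [heq]; exact ih
  have := key n
  simpa using this

lemma par (hsp : SP f) (onto : Onto f) {θ : Fin n → Pref V} {a : V}
    (h : ∀ (i : Fin n) v, v ≠ a → (θ i).val v a) : f θ = a := by
  obtain ⟨σ, hσ⟩ := onto a
  apply mon hsp hσ
  intro i v hv
  haveI := (σ i).2
  have hva : v ≠ a := by rintro rfl; exact absurd hv (irrefl v)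
  exact h i v hva

lemma ppo (hsp : SP f) (onto : Onto f) {θ : Fin n → Pref V} {w x : V}
    (hw : f θ = w) (hxw : x ≠ w) (h : ∀ i, (θ i).val w x) : False := by
  have h2 : f (fun _ => mk (s2 x w)) = w := by
    apply mon hsp hw
    intro i v hv
    haveI := (θ i).2
    have hvw : v ≠ w := by rintro rfl; exact absurd hv (irrefl v)
    have hvx : v ≠ x := by
      rintro rfl
      exact absurd (_root_.trans hv (h i)) (irrefl v)
    apply mk_lt
    simp [s2, hvx, hvw, Ne.symm hxw]
  have h3 : f (fun _ => mk (s2 x w)) = x := by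
    apply par hsp onto
    intro i v hv
    apply mk_lt
    by_cases hvw : v = w <;> simp [s2, hv, hvw, Ne.symm hxw]
  rw [h2] at h3
  exact hxw h3.symm


variable (f)

/-- top-two profile: everyone ranks `x,y` in the top two positions;
members of `U` prefer `x`, the others prefer `y`. -/
noncomputable def Ptt (U : Finset (Fin n)) (x y : V) : Fin n → Pref V :=
  fun i => if i ∈ U then mk (s2 x y) else mk (s2 y x)

/-- `U` is decisive for `x` against `y`. -/
def decc (U : Finset (Fin n)) (x y : V) : Prop := f (Ptt U x y) = x

variable {f}

lemma dec_univ (hsp : SP f) (onto : Onto f) {x y : V} (hxy : x ≠ y) :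
    decc f Finset.univ x y := by
  apply par hsp onto
  intro i v hv
  have : (Ptt Finset.univ x y : Fin n → Pref V) i = mk (s2 x y) := by
    simp [Ptt]
  rw [this]
  apply mk_lt
  by_cases hvy : v = y <;> simp [s2, hv, hvy, Ne.symm hxy]

lemma f_empty (hsp : SP f) (onto : Onto f) {x y : V} (hxy : x ≠ y) :
    f (Ptt (∅ : Finset (Fin n)) x y) = y := by
  apply par hsp onto
  intro i v hv
  have : (Ptt (∅ : Finset (Fin n)) x y) i = mk (s2 y x) := by simp [Ptt]
  rw [this]
  apply mk_lt
  by_cases hvx : v = x <;> simp [s2, hv, hvx, hxy]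

lemma not_dec_empty (hsp : SP f) (onto : Onto f) {x y : V} (hxy : x ≠ y) :
    ¬ decc f (∅ : Finset (Fin n)) x y := by
  intro h
  rw [decc, f_empty hsp onto hxy] at h
  exact hxy h.symm

lemma mem_tt (hsp : SP f) (onto : Onto f) {U : Finset (Fin n)} {x y : V} (hxy : x ≠ y) :
    f (Ptt U x y) = x ∨ f (Ptt U x y) = y := by
  by_contra hc
  push_neg at hc
  obtain ⟨hx, hy⟩ := hc
  set w := f (Ptt U x y) with hw
  refine ppo hsp onto hw.symm (Ne.symm hy) ?_
  intro i
  by_cases hiU : i ∈ U <;> simp only [Ptt, if_pos, if_neg, hiU, if_true, if_false]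
  · apply mk_lt; simp [s2, hx, hy, Ne.symm hxy]
  · apply mk_lt; simp [s2, hx, hy, hxy]

lemma dec_mono (hsp : SP f) {U U' : Finset (Fin n)} {x y : V} (hxy : x ≠ y)
    (h : decc f U x y) (hUU : U ⊆ U') : decc f U' x y := by
  apply mon hsp h
  intro i v hv
  by_cases hiU' : i ∈ U'
  · simp only [Ptt, if_pos hiU']
    haveI := (Ptt U x y i).2
    have hvx : v ≠ x := by rintro rfl; exact absurd hv (irrefl v)
    apply mk_lt
    by_cases hvy : v = y <;> simp [s2, hvx, hvy, Ne.symm hxy]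
  · have hiU : i ∉ U := fun hh => hiU' (hUU hh)
    simpa only [Ptt, if_neg hiU, if_neg hiU'] using hv

lemma dec_compl (hsp : SP f) (onto : Onto f) {U : Finset (Fin n)} {x y : V} (hxy : x ≠ y)
    (h : ¬ decc f U x y) : decc f Uᶜ y x := by
  have hy : f (Ptt U x y) = y := (mem_tt hsp onto hxy).resolve_left h
  have hPtt : Ptt (Uᶜ : Finset (Fin n)) y x = Ptt U x y := by
    funext i
    by_cases hiU : i ∈ U <;> simp [Ptt, hiU]
  rw [decc, hPtt]
  exact hy


lemma dec_trans1 (hsp : SP f) (onto : Onto f) {U : Finset (Fin n)} {x y z : V}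
    (hxy : x ≠ y) (hxz : x ≠ z) (hyz : y ≠ z) (h : decc f U x y) : decc f U x z := by
  have hyx := Ne.symm hxy; have hzx := Ne.symm hxz; have hzy := Ne.symm hyz
  set R : Fin n → Pref V := fun i => if i ∈ U then mk (s3 x y z) else mk (s3 y z x) with hR
  have hmem : f R = x ∨ f R = y ∨ f R = z := by
    by_contra hc
    push_neg at hc
    obtain ⟨h1, h2, h3⟩ := hc
    refine ppo hsp onto (rfl : f R = f R) (Ne.symm h3) ?_
    intro i
    by_cases hiU : i ∈ U <;> simp only [hR] <;> [rw [if_pos hiU]; rw [if_neg hiU]] <;>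
      apply mk_lt <;> simp [s3, ← hR, h1, h2, h3, hxy, hxz, hyz, hyx, hzx, hzy]
  have hnz : f R ≠ z := by
    intro hz
    refine ppo hsp onto hz hyz ?_
    intro i
    by_cases hiU : i ∈ U <;> simp only [hR] <;> [rw [if_pos hiU]; rw [if_neg hiU]] <;>
      apply mk_lt <;> simp [s3, hxy, hxz, hyz, hyx, hzx, hzy]
  have hny : f R ≠ y := by
    intro hy
    have : f (Ptt U x y) = y := by
      apply mon hsp hy
      intro i v
      by_cases hiU : i ∈ U <;> simp only [hR, Ptt] <;>
          [rw [if_pos hiU, if_pos hiU]; rw [if_neg hiU, if_neg hiU]] <;>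
        refine mk_imp _ _ _ ?_ ?_ v <;> intro u <;>
        by_cases h1 : u = x <;> by_cases h2 : u = y <;> by_cases h3 : u = z <;>
        simp_all [s2, s3] <;> omega
    rw [decc] at h; rw [this] at h; exact hxy h.symm
  have hx : f R = x := by tauto
  rw [decc]
  apply mon hsp hx
  intro i v
  by_cases hiU : i ∈ U <;> simp only [hR, Ptt] <;>
      [rw [if_pos hiU, if_pos hiU]; rw [if_neg hiU, if_neg hiU]] <;>
    refine mk_imp _ _ _ ?_ ?_ v <;> intro u <;>
    by_cases h1 : u = x <;> by_cases h2 : u = y <;> by_cases h3 : u = z <;>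
    simp_all [s2, s3] <;> omega


lemma dec_trans2 (hsp : SP f) (onto : Onto f) {U : Finset (Fin n)} {x y z : V}
    (hxy : x ≠ y) (hxz : x ≠ z) (hyz : y ≠ z) (h : decc f U x y) : decc f U z y := by
  have hyx := Ne.symm hxy; have hzx := Ne.symm hxz; have hzy := Ne.symm hyz
  set R : Fin n → Pref V := fun i => if i ∈ U then mk (s3 z x y) else mk (s3 y z x) with hR
  have hmem : f R = x ∨ f R = y ∨ f R = z := by
    by_contra hc
    push_neg at hc
    obtain ⟨h1, h2, h3⟩ := hc
    refine ppo hsp onto (rfl : f R = f R) (Ne.symm h2) ?_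
    intro i
    by_cases hiU : i ∈ U <;> simp only [hR] <;> [rw [if_pos hiU]; rw [if_neg hiU]] <;>
      apply mk_lt <;> simp [s3, ← hR, h1, h2, h3, hxy, hxz, hyz, hyx, hzx, hzy]
  have hnx : f R ≠ x := by
    intro hx
    refine ppo hsp onto hx hzx ?_
    intro i
    by_cases hiU : i ∈ U <;> simp only [hR] <;> [rw [if_pos hiU]; rw [if_neg hiU]] <;>
      apply mk_lt <;> simp [s3, hxy, hxz, hyz, hyx, hzx, hzy]
  have hny : f R ≠ y := by
    intro hy
    have : f (Ptt U x y) = y := by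
      apply mon hsp hy
      intro i v
      by_cases hiU : i ∈ U <;> simp only [hR, Ptt] <;>
          [rw [if_pos hiU, if_pos hiU]; rw [if_neg hiU, if_neg hiU]] <;>
        refine mk_imp _ _ _ ?_ ?_ v <;> intro u <;>
        by_cases h1 : u = x <;> by_cases h2 : u = y <;> by_cases h3 : u = z <;>
        simp_all [s2, s3] <;> omega
    rw [decc] at h; rw [this] at h; exact hxy h.symm
  have hz : f R = z := by tauto
  rw [decc]
  apply mon hsp hz
  intro i v
  by_cases hiU : i ∈ U <;> simp only [hR, Ptt] <;>
      [rw [if_pos hiU, if_pos hiU]; rw [if_neg hiU, if_neg hiU]] <;>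
    refine mk_imp _ _ _ ?_ ?_ v <;> intro u <;>
    by_cases h1 : u = x <;> by_cases h2 : u = y <;> by_cases h3 : u = z <;>
    simp_all [s2, s3] <;> omega

lemma exists_third (hV : 3 ≤ Fintype.card V) (x y : V) : ∃ z : V, z ≠ x ∧ z ≠ y := by
  by_contra hc
  push_neg at hc
  have hsub : (Finset.univ : Finset V) ⊆ {x, y} := by
    intro v _
    rcases eq_or_ne v x with rfl | hvx
    · simp
    · simp [hc v hvx]
  have := Finset.card_le_card hsub
  have hcard : ({x, y} : Finset V).card ≤ 2 := Finset.card_insert_le x {y} |>.trans (by simp)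
  simp only [Finset.card_univ] at this
  omega

lemma dec_pairs (hsp : SP f) (onto : Onto f) (hV : 3 ≤ Fintype.card V)
    {U : Finset (Fin n)} {x y : V} (hxy : x ≠ y) (h : decc f U x y) :
    ∀ p q : V, p ≠ q → decc f U p q := by
  -- first: decc U y x
  obtain ⟨z, hzx, hzy⟩ := exists_third hV x y
  have hxz := Ne.symm hzx; have hyz := Ne.symm hzy; have hyx := Ne.symm hxy
  have hxz' : decc f U x z := dec_trans1 hsp onto hxy hxz hyz h
  have hyz' : decc f U y z := dec_trans2 hsp onto hxz hxy (Ne.symm hyz) hxz'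
  have hyx' : decc f U y x := dec_trans1 hsp onto hyz (Ne.symm hxy) (Ne.symm hxz) hyz'
  intro p q hpq
  rcases eq_or_ne q y with rfl | hqy
  · -- target (p, y)
    rcases eq_or_ne p x with rfl | hpx
    · exact h
    · exact dec_trans2 hsp onto hxy (Ne.symm hpx) (Ne.symm hpq) h
  · rcases eq_or_ne q x with rfl | hqx
    · -- target (p, x)
      rcases eq_or_ne p y with rfl | hpy
      · exact hyx'
      · exact dec_trans2 hsp onto hyx (Ne.symm hpy) (Ne.symm hpq) hyx'
    · -- q ∉ {x, y}
      have hq1 : decc f U x q := dec_trans1 hsp onto hxy (Ne.symm hqx) (Ne.symm hqy) h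
      rcases eq_or_ne p x with rfl | hpx
      · exact hq1
      · exact dec_trans2 hsp onto (Ne.symm hqx) (Ne.symm hpx) (Ne.symm hpq) hq1


lemma dec_inter (hsp : SP f) (onto : Onto f) (hV : 3 ≤ Fintype.card V)
    {U₁ U₂ : Finset (Fin n)} {x y : V} (hxy : x ≠ y)
    (h1 : decc f U₁ x y) (h2 : decc f U₂ x y) : decc f (U₁ ∩ U₂) x y := by
  obtain ⟨z, hzx, hzy⟩ := exists_third hV x y
  have hxz := Ne.symm hzx; have hyz := Ne.symm hzy; have hyx := Ne.symm hxy
  have h2' : decc f U₂ y z := dec_pairs hsp onto hV hxy h2 y z hyz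
  set R : Fin n → Pref V := fun i =>
    if i ∈ U₁ then (if i ∈ U₂ then mk (s3 x y z) else mk (s3 z x y)) else mk (s3 y z x) with hR
  have hmem : f R = x ∨ f R = y ∨ f R = z := by
    by_contra hc
    push_neg at hc
    obtain ⟨g1, g2, g3⟩ := hc
    refine ppo hsp onto (rfl : f R = f R) (Ne.symm g2) ?_
    intro i
    by_cases hi1 : i ∈ U₁ <;> by_cases hi2 : i ∈ U₂
    · simp only [hR]; rw [if_pos hi1, if_pos hi2]; apply mk_lt
      simp [s3, ← hR, g1, g2, g3, hxy, hxz, hyz, hyx, hzx, hzy]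
    · simp only [hR]; rw [if_pos hi1, if_neg hi2]; apply mk_lt
      simp [s3, ← hR, g1, g2, g3, hxy, hxz, hyz, hyx, hzx, hzy]
    · simp only [hR]; rw [if_neg hi1]; apply mk_lt
      simp [s3, ← hR, g1, g2, g3, hxy, hxz, hyz, hyx, hzx, hzy]
    · simp only [hR]; rw [if_neg hi1]; apply mk_lt
      simp [s3, ← hR, g1, g2, g3, hxy, hxz, hyz, hyx, hzx, hzy]
  have hny : f R ≠ y := by
    intro hy
    have hcon : f (Ptt U₁ x y) = y := by
      apply mon hsp hy
      intro i v
      by_cases hi1 : i ∈ U₁ <;> by_cases hi2 : i ∈ U₂ <;> simp only [hR, Ptt]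
      · rw [if_pos hi1, if_pos hi2, if_pos hi1]
        refine mk_imp _ _ _ ?_ ?_ v <;> intro u <;>
          by_cases e1 : u = x <;> by_cases e2 : u = y <;> by_cases e3 : u = z <;>
          simp_all [s2, s3] <;> omega
      · rw [if_pos hi1, if_neg hi2, if_pos hi1]
        refine mk_imp _ _ _ ?_ ?_ v <;> intro u <;>
          by_cases e1 : u = x <;> by_cases e2 : u = y <;> by_cases e3 : u = z <;>
          simp_all [s2, s3] <;> omega
      · rw [if_neg hi1, if_neg hi1]
        refine mk_imp _ _ _ ?_ ?_ v <;> intro u <;>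
          by_cases e1 : u = x <;> by_cases e2 : u = y <;> by_cases e3 : u = z <;>
          simp_all [s2, s3] <;> omega
      · rw [if_neg hi1, if_neg hi1]
        refine mk_imp _ _ _ ?_ ?_ v <;> intro u <;>
          by_cases e1 : u = x <;> by_cases e2 : u = y <;> by_cases e3 : u = z <;>
          simp_all [s2, s3] <;> omega
    rw [decc] at h1; rw [hcon] at h1; exact hxy h1.symm
  have hnz : f R ≠ z := by
    intro hz
    have hcon : f (Ptt U₂ y z) = z := by
      apply mon hsp hz
      intro i v
      by_cases hi1 : i ∈ U₁ <;> by_cases hi2 : i ∈ U₂ <;> simp only [hR, Ptt]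
      · rw [if_pos hi1, if_pos hi2, if_pos hi2]
        refine mk_imp _ _ _ ?_ ?_ v <;> intro u <;>
          by_cases e1 : u = x <;> by_cases e2 : u = y <;> by_cases e3 : u = z <;>
          simp_all [s2, s3] <;> omega
      · rw [if_pos hi1, if_neg hi2, if_neg hi2]
        refine mk_imp _ _ _ ?_ ?_ v <;> intro u <;>
          by_cases e1 : u = x <;> by_cases e2 : u = y <;> by_cases e3 : u = z <;>
          simp_all [s2, s3] <;> omega
      · rw [if_neg hi1, if_pos hi2]
        refine mk_imp _ _ _ ?_ ?_ v <;> intro u <;>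
          by_cases e1 : u = x <;> by_cases e2 : u = y <;> by_cases e3 : u = z <;>
          simp_all [s2, s3] <;> omega
      · rw [if_neg hi1, if_neg hi2]
        refine mk_imp _ _ _ ?_ ?_ v <;> intro u <;>
          by_cases e1 : u = x <;> by_cases e2 : u = y <;> by_cases e3 : u = z <;>
          simp_all [s2, s3] <;> omega
    rw [decc] at h2'; rw [hcon] at h2'; exact hyz h2'.symm
  have hx : f R = x := by tauto
  have hxzdec : decc f (U₁ ∩ U₂) x z := by
    rw [decc]
    apply mon hsp hx
    intro i v
    by_cases hi1 : i ∈ U₁ <;> by_cases hi2 : i ∈ U₂ <;> simp only [hR, Ptt]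
    · rw [if_pos hi1, if_pos hi2, if_pos (Finset.mem_inter.mpr ⟨hi1, hi2⟩)]
      refine mk_imp _ _ _ ?_ ?_ v <;> intro u <;>
        by_cases e1 : u = x <;> by_cases e2 : u = y <;> by_cases e3 : u = z <;>
        simp_all [s2, s3] <;> omega
    · rw [if_pos hi1, if_neg hi2, if_neg (by simp [Finset.mem_inter, hi2])]
      refine mk_imp _ _ _ ?_ ?_ v <;> intro u <;>
        by_cases e1 : u = x <;> by_cases e2 : u = y <;> by_cases e3 : u = z <;>
        simp_all [s2, s3] <;> omega
    · rw [if_neg hi1, if_neg (by simp [Finset.mem_inter, hi1])]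
      refine mk_imp _ _ _ ?_ ?_ v <;> intro u <;>
        by_cases e1 : u = x <;> by_cases e2 : u = y <;> by_cases e3 : u = z <;>
        simp_all [s2, s3] <;> omega
    · rw [if_neg hi1, if_neg (by simp [Finset.mem_inter, hi1])]
      refine mk_imp _ _ _ ?_ ?_ v <;> intro u <;>
        by_cases e1 : u = x <;> by_cases e2 : u = y <;> by_cases e3 : u = z <;>
        simp_all [s2, s3] <;> omega
  exact dec_pairs hsp onto hV hxz hxzdec x y hxy


lemma top_exists [Nonempty V] (p : Pref V) :
    ∃ t : V, ∀ v : V, v ≠ t → p.val v t := by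
  haveI := p.2
  haveI : DecidableRel p.val := fun a b => Classical.dec _
  letI : LinearOrder V := linearOrderOfSTO p.val
  have hne' : (Finset.univ : Finset V).Nonempty := Finset.univ_nonempty
  refine ⟨Finset.univ.max' hne', ?_⟩
  intro v hv
  have hle : v ≤ Finset.univ.max' hne' := Finset.le_max' _ v (Finset.mem_univ v)
  exact lt_of_le_of_ne hle hv

lemma dict (hsp : SP f) (onto : Onto f) (hV : 3 ≤ Fintype.card V) {i : Fin n}
    (hdec : ∀ p q : V, p ≠ q → decc f ({i} : Finset (Fin n)) p q) :
    ∀ θ (a : V), a ≠ f θ → (θ i).val a (f θ) := by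
  intro θ
  haveI : Nonempty V := Fintype.card_pos_iff.mp (by omega)
  obtain ⟨t, ht⟩ := top_exists (θ i)
  obtain ⟨y, hyt, -⟩ := exists_third hV t t
  have hty := Ne.symm hyt
  set S : Fin n → Pref V :=
    fun j => if j ∈ ({i} : Finset (Fin n)) then mk (s2 t y) else mk (sbt t y) with hS
  have hmem : f S = t ∨ f S = y := by
    by_contra hc
    push_neg at hc
    obtain ⟨g1, g2⟩ := hc
    refine ppo hsp onto (rfl : f S = f S) (Ne.symm g2) ?_
    intro j
    by_cases hj : j ∈ ({i} : Finset (Fin n))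
    · have hSj : S j = mk (s2 t y) := by simp only [hS]; rw [if_pos hj]
      rw [hSj]; apply mk_lt; simp [s2, g1, g2, hyt, hty]
    · have hSj : S j = mk (sbt t y) := by simp only [hS]; rw [if_neg hj]
      rw [hSj]; apply mk_lt; simp [sbt, g1, g2, hyt, hty]
  have hny : f S ≠ y := by
    intro hy
    have hcon : f (Ptt ({i} : Finset (Fin n)) t y) = y := by
      apply mon hsp hy
      intro j v
      by_cases hj : j ∈ ({i} : Finset (Fin n)) <;> simp only [hS, Ptt] <;>
          [rw [if_pos hj, if_pos hj]; rw [if_neg hj, if_neg hj]] <;>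
        refine mk_imp _ _ _ ?_ ?_ v <;> intro u <;>
        by_cases e1 : u = t <;> by_cases e2 : u = y <;> simp_all [s2, sbt] <;> omega
    have hcd := hdec t y hty
    rw [decc, hcon] at hcd
    exact hty hcd.symm
  have hft : f S = t := hmem.resolve_right hny
  have hfθ : f θ = t := by
    apply mon hsp hft
    intro j v hv
    by_cases hj : j ∈ ({i} : Finset (Fin n))
    · have hji : j = i := by simpa using hj
      subst hji
      have hvt : v ≠ t := by
        rintro rfl
        haveI := (S j).2
        exact absurd hv (irrefl v)
      exact ht v hvt
    · exfalso
      simp only [hS, if_neg hj] at hv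
      rcases hv with hlt | ⟨heq, htie⟩
      · simp [sbt, hty] at hlt
      · have hvt : v = t := by
          by_cases e1 : v = y <;> by_cases e2 : v = t <;> simp_all [sbt]
        subst hvt
        exact absurd htie (lt_irrefl _)
  intro a ha
  rw [hfθ] at ha ⊢
  exact ht a ha

lemma main (hV : 3 ≤ Fintype.card V) (hsp : SP f) (onto : Onto f) :
    ∃ i : Fin n, ∀ θ (a : V), a ≠ f θ → (θ i).val a (f θ) := by
  classical
  obtain ⟨x, y, hxy⟩ := Fintype.exists_pair_of_one_lt_card (by omega : 1 < Fintype.card V)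
  set D : Finset (Finset (Fin n)) := Finset.univ.filter (fun U => decc f U x y) with hD
  have hinf : ∀ S : Finset (Finset (Fin n)),
      (∀ U ∈ S, decc f U x y) → decc f (S.inf id) x y := by
    intro S
    induction S using Finset.induction_on with
    | empty =>
      intro _
      rw [Finset.inf_empty, Finset.top_eq_univ]
      exact dec_univ hsp onto hxy
    | @insert a S hnotmem ih =>
      intro hall
      rw [Finset.inf_insert]
      exact dec_inter hsp onto hV hxy (hall _ (Finset.mem_insert_self _ _))
        (ih fun U hU => hall U (Finset.mem_insert_of_mem hU))
  have hM : decc f (D.inf id) x y := by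
    apply hinf
    intro U hU
    exact (Finset.mem_filter.mp hU).2
  have hMne : (D.inf id).Nonempty := by
    rw [Finset.nonempty_iff_ne_empty]
    intro he
    rw [he] at hM
    exact not_dec_empty hsp onto hxy hM
  obtain ⟨i, hiM⟩ := hMne
  have hsing : decc f ({i} : Finset (Fin n)) x y := by
    by_contra hns
    have h1 : decc f (({i} : Finset (Fin n))ᶜ) y x := dec_compl hsp onto hxy hns
    have h2 : decc f (({i} : Finset (Fin n))ᶜ) x y :=
      dec_pairs hsp onto hV (Ne.symm hxy) h1 x y hxy
    have hmemD : (({i} : Finset (Fin n))ᶜ) ∈ D := by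
      rw [hD, Finset.mem_filter]
      exact ⟨Finset.mem_univ _, h2⟩
    have hle := Finset.inf_le (f := id) hmemD
    have : i ∈ (({i} : Finset (Fin n))ᶜ) := hle hiM
    rw [Finset.mem_compl] at this
    exact this (Finset.mem_singleton_self i)
  exact ⟨i, dict hsp onto hV (dec_pairs hsp onto hV hxy hsing)⟩

end GS

/-- Gibbard–Satterthwaite: an incentive compatible social choice function onto a
set `V` with at least three elements, defined on profiles of strict total orders
(private types) of `n` agents, is a dictatorship. Here `(θ i).val u v` means agent
`i` strictly prefers `v` over `u`. -/
theorem stmt0 {V : Type} [Fintype V] {n : ℕ}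
    (hV : 3 ≤ Fintype.card V)
    (f : (Fin n → {r : V → V → Prop // IsStrictTotalOrder V r}) → V)
    (onto : ∀ v : V, ∃ θ, f θ = v)
    (ic : ¬ ∃ (i : Fin n) (θ : Fin n → {r : V → V → Prop // IsStrictTotalOrder V r})
        (θi' : {r : V → V → Prop // IsStrictTotalOrder V r}) (a b : V),
        f θ = b ∧ (θ i).val b a ∧ f (Function.update θ i θi') = a) :
    ∃ i : Fin n, ∀ θ, ∀ a : V, a ≠ f θ → (θ i).val a (f θ) := by
  classical
  have hsp : GS.SP f := by
    intro θ i p h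
    exact ic ⟨i, θ, p, f (Function.update θ i p), f θ, rfl, h, rfl⟩
  exact GS.main hV hsp onto
end

section
/- If colluders are not required to share the same most preferred value, then no (c,f)-resilient consensus protocol exists for any c ≥ 2 (with |V| ≥ 3). Moreover, even requiring that no colluder is worse off after the deviation, no (c,f)-resilient consensus protocol exists for any c ≥ 2 and f ≥ 1. -/
open Classical

/-- A private type: a strict total order on `V` (`r u v` means `v` is preferred over `u`). -/
abbrev PrefOrd (V : Type) := {r : V → V → Prop // IsStrictTotalOrder V r}

/-- `v` is the most preferred value of preference `θ`. -/
def PrefTop {V : Type} (θ : PrefOrd V) (v : V) : Prop := ∀ u, u ≠ v → θ.val u v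

/-- A failure pattern: `F i j r` means `i`'s round-`r` message to `j` succeeds (if sent). -/
abbrev FPat (n : ℕ) := Fin n → Fin n → ℕ → Prop

/-- Well-formedness: once an agent fails to send some message, it sends nothing later. -/
def FPwf {n : ℕ} (F : FPat n) : Prop :=
  ∀ i j r, ¬ F i j r → ∀ j' r', r < r' → ¬ F i j' r'

/-- Agent `i` is faulty (crashes) in `F`. -/
def FCrashes {n : ℕ} (F : FPat n) (i : Fin n) : Prop := ∃ j r, 1 ≤ r ∧ ¬ F i j r

/-- Agent `i` is correct in `F`. -/
def FCorrect {n : ℕ} (F : FPat n) (i : Fin n) : Prop := ∀ j r, 1 ≤ r → F i j r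

/-- A valid failure pattern with at most `f` crashes. -/
def ValidFP {n : ℕ} (f : ℕ) (F : FPat n) : Prop :=
  FPwf F ∧ Set.ncard {i : Fin n | FCrashes F i} ≤ f

/-- Agent `i` is still alive at the end of round `r` (sent all messages through round `r`). -/
def AliveEnd {n : ℕ} (F : FPat n) (i : Fin n) (r : ℕ) : Prop :=
  ∀ j r', 1 ≤ r' → r' ≤ r → F i j r'

/-- A deterministic synchronous algorithm of one agent: given the history of received
message vectors of past rounds, produce the messages to send in the next round and a
possible decision at the end of the current round. -/
structure SyncAlg (n : ℕ) (M V : Type) where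
  step : List (Fin n → Option M) → (Fin n → Option M) × Option V

/-- `histRun A F r i`: the message history of agent `i` at the end of round `r` in the
run of algorithm profile `A` with failure pattern `F`. -/
noncomputable def histRun {n : ℕ} {M V : Type} (A : Fin n → SyncAlg n M V)
    (F : FPat n) : ℕ → Fin n → List (Fin n → Option M)
  | 0, _ => []
  | r + 1, i =>
    histRun A F r i ++
      [fun j => if F j i (r + 1) then ((A j).step (histRun A F r j)).1 i else none]

/-- The decision output of agent `i` at the end of round `r`. -/
noncomputable def decAt {n : ℕ} {M V : Type} (A : Fin n → SyncAlg n M V)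
    (F : FPat n) (i : Fin n) (r : ℕ) : Option V :=
  ((A i).step (histRun A F r i)).2

/-- Agent `i` decides value `v` in the run (at a point where `i` is still alive). -/
def Decides {n : ℕ} {M V : Type} (A : Fin n → SyncAlg n M V) (F : FPat n)
    (i : Fin n) (v : V) : Prop :=
  ∃ r, AliveEnd F i r ∧ decAt A F i r = some v

/-- The run of `A` under `F` with type profile `θ` satisfies consensus:
Termination, Uniform Agreement and Validity. -/
def ConsOK {n : ℕ} {M V : Type} (A : Fin n → SyncAlg n M V) (F : FPat n)
    (θ : Fin n → PrefOrd V) : Prop :=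
  (∀ i, FCorrect F i → ∃ v, Decides A F i v) ∧
  (∀ i j v w, Decides A F i v → Decides A F j w → v = w) ∧
  (∀ i v, Decides A F i v → ∃ j, PrefTop (θ j) v)

/-- The algorithm profile obtained from strategy profile `σ` and type profile `θ`. -/
def algsOf {n : ℕ} {M V : Type} (σ : Fin n → PrefOrd V → SyncAlg n M V)
    (θ : Fin n → PrefOrd V) : Fin n → SyncAlg n M V :=
  fun i => σ i (θ i)

/-- `σ` is a legal strategy profile for consensus with at most `f` crashes. -/
def Legal {n : ℕ} {M V : Type} (f : ℕ) (σ : Fin n → PrefOrd V → SyncAlg n M V) : Prop :=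
  ∀ F θ, ValidFP f F → ConsOK (algsOf σ θ) F θ

/-- Colluders' strategies `τ` (functions of the whole type profile) depend only on
the types of the colluders in `C`. -/
def DepOnlyOn {n : ℕ} {M V : Type} (C : Finset (Fin n))
    (τ : Fin n → (Fin n → PrefOrd V) → SyncAlg n M V) : Prop :=
  ∀ i ∈ C, ∀ θ θ', (∀ j ∈ C, θ j = θ' j) → τ i θ = τ i θ'

/-- The deviated algorithm profile: colluders in `C` use `τ`, others follow `σ`. -/
noncomputable def devAlgs {n : ℕ} {M V : Type} (σ : Fin n → PrefOrd V → SyncAlg n M V)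
    (C : Finset (Fin n)) (τ : Fin n → (Fin n → PrefOrd V) → SyncAlg n M V)
    (θ : Fin n → PrefOrd V) : Fin n → SyncAlg n M V :=
  fun i => if i ∈ C then τ i θ else σ i (θ i)

/-- Colluder `i` strictly benefits in scenario `(F, θ)` when the profile `A` is
replaced by `A'`: `i` does not crash, the deviated run still reaches consensus in
this scenario, and `i`'s decision improves according to `θ i`. -/
def Benefits {n : ℕ} {M V : Type} (A A' : Fin n → SyncAlg n M V) (F : FPat n)
    (θ : Fin n → PrefOrd V) (i : Fin n) : Prop :=
  ¬ FCrashes F i ∧ ConsOK A' F θ ∧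
    ∃ d d', Decides A F i d ∧ Decides A' F i d' ∧ (θ i).val d d'

noncomputable def mkOrd {V : Type} [Fintype V] (x : V) : PrefOrd V :=
  ⟨fun u v => u ≠ x ∧ (v = x ∨ (v ≠ x ∧ Fintype.equivFin V u < Fintype.equivFin V v)),
   { trichotomous := by
       intro u v hnuv hnvu
       by_contra huv
       by_cases hu : u = x
       · exact hnvu ⟨fun hv => huv (hu.trans hv.symm), Or.inl hu⟩
       · by_cases hv : v = x
         · exact hnuv ⟨hu, Or.inl hv⟩
         · rcases lt_trichotomy (Fintype.equivFin V u) (Fintype.equivFin V v) with h | h | h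
           · exact hnuv ⟨hu, Or.inr ⟨hv, h⟩⟩
           · exact huv ((Fintype.equivFin V).injective h)
           · exact hnvu ⟨hv, Or.inr ⟨hu, h⟩⟩
     irrefl := by
       rintro u ⟨h1, h2 | ⟨h2, h3⟩⟩
       · exact h1 h2
       · exact lt_irrefl _ h3
     trans := by
       rintro u v w ⟨hu, hv | ⟨hv, huv⟩⟩ ⟨hv', hw⟩
       · exact absurd hv hv'
       · rcases hw with hw | ⟨hw, hvw⟩
         · exact ⟨hu, Or.inl hw⟩
         · exact ⟨hu, Or.inr ⟨hw, huv.trans hvw⟩⟩ }⟩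

lemma mkOrd_top {V : Type} [Fintype V] (x : V) : PrefTop (mkOrd x) x :=
  fun u hu => ⟨hu, Or.inl rfl⟩

lemma prefTop_unique {V : Type} (θ : PrefOrd V) {v w : V}
    (hv : PrefTop θ v) (hw : PrefTop θ w) : v = w := by
  by_contra h
  have h1 : θ.val w v := hv w (fun hh => h hh.symm)
  have h2 : θ.val v w := hw v h
  exact θ.prop.irrefl v (θ.prop.trans v w v h2 h1)

noncomputable def profOf {V : Type} {n : ℕ} (α β : PrefOrd V) (S : Finset (Fin n)) :
    Fin n → PrefOrd V := fun i => if i ∈ S then α else β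

lemma exists_manip {V : Type} [Fintype V] {n : ℕ} (hn : 2 ≤ n) (hV : 2 ≤ Fintype.card V)
    (g : (Fin n → PrefOrd V) → V)
    (valid : ∀ θ, ∃ j, PrefTop (θ j) (g θ)) :
    ∃ (θ : Fin n → PrefOrd V) (p q : Fin n), p ≠ q ∧
      (θ q).val (g θ) (g (Function.update θ p (θ q))) := by
  classical
  by_contra hM
  push_neg at hM
  obtain ⟨a, b, hab⟩ := Fintype.exists_pair_of_one_lt_card (α := V) (by omega)
  set α := mkOrd a with hα
  set β := mkOrd b with hβ
  set P : Finset (Fin n) → Fin n → PrefOrd V := fun S => profOf α β S with hP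
  have hPm : ∀ (S : Finset (Fin n)) i, i ∈ S → P S i = α := by
    intro S i hi; simp [hP, profOf, hi]
  have hPn : ∀ (S : Finset (Fin n)) i, i ∉ S → P S i = β := by
    intro S i hi; simp [hP, profOf, hi]
  have hval2 : ∀ S : Finset (Fin n), g (P S) = a ∨ g (P S) = b := by
    intro S
    obtain ⟨j, hj⟩ := valid (P S)
    by_cases hjS : j ∈ S
    · left; exact prefTop_unique _ hj (by rw [hPm S j hjS]; exact mkOrd_top a)
    · right; exact prefTop_unique _ hj (by rw [hPn S j hjS]; exact mkOrd_top b)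
  have huniv : g (P Finset.univ) = a := by
    obtain ⟨j, hj⟩ := valid (P Finset.univ)
    exact prefTop_unique _ hj (by rw [hPm _ j (Finset.mem_univ j)]; exact mkOrd_top a)
  have hempty : g (P ∅) = b := by
    obtain ⟨j, hj⟩ := valid (P ∅)
    exact prefTop_unique _ hj (by rw [hPn _ j (Finset.notMem_empty j)]; exact mkOrd_top b)
  have key : ∀ m (S : Finset (Fin n)), Sᶜ.card = m → S.Nonempty → g (P S) = a := by
    intro m
    induction m with
    | zero =>
      intro S hS _
      have hSu : S = Finset.univ := by
        rwa [Finset.card_eq_zero, Finset.compl_eq_empty_iff] at hS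
      rw [hSu]; exact huniv
    | succ m ih =>
      intro S hS hne
      obtain ⟨k, hk⟩ : Sᶜ.Nonempty := Finset.card_pos.mp (by omega)
      obtain ⟨i, hi⟩ := hne
      have hknS : k ∉ S := Finset.mem_compl.mp hk
      have hki : k ≠ i := fun h => hknS (h ▸ hi)
      have hS' : (insert k S)ᶜ.card = m := by
        rw [Finset.compl_insert, Finset.card_erase_of_mem hk, hS]; omega
      have hIH : g (P (insert k S)) = a :=
        ih (insert k S) hS' ⟨k, Finset.mem_insert_self _ _⟩
      have hup : Function.update (P S) k ((P S) i) = P (insert k S) := by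
        funext j
        by_cases hj : j = k
        · subst hj
          rw [Function.update_self, hPm S i hi, hPm _ j (Finset.mem_insert_self _ _)]
        · rw [Function.update_of_ne hj]
          by_cases hjS : j ∈ S
          · rw [hPm S j hjS, hPm _ j (Finset.mem_insert_of_mem hjS)]
          · rw [hPn S j hjS, hPn _ j (by simp [Finset.mem_insert, hj, hjS])]
      have hM' := hM (P S) k i hki
      rw [hup, hIH] at hM'
      rcases hval2 S with h | h
      · exact h
      · exfalso
        apply hM'
        rw [h, hPm S i hi]
        exact mkOrd_top a b (Ne.symm hab)
  have h0 : (0 : ℕ) < n := by omega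
  have h1 : (1 : ℕ) < n := by omega
  set i0 : Fin n := ⟨0, h0⟩ with hi0
  set j1 : Fin n := ⟨1, h1⟩ with hj1
  have hij : i0 ≠ j1 := by
    simp [hi0, hj1, Fin.ext_iff]
  have hone : g (P {i0}) = a :=
    key ({i0} : Finset (Fin n))ᶜ.card {i0} rfl ⟨i0, Finset.mem_singleton_self i0⟩
  have hj1n : j1 ∉ ({i0} : Finset (Fin n)) := by
    simp [Finset.mem_singleton]; exact fun h => hij h.symm
  have hupd : Function.update (P {i0}) i0 ((P {i0}) j1) = P ∅ := by
    funext j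
    by_cases hj : j = i0
    · subst hj
      rw [Function.update_self, hPn _ j1 hj1n, hPn _ i0 (Finset.notMem_empty i0)]
    · rw [Function.update_of_ne hj, hPn _ j (by simp [Finset.mem_singleton, hj]),
        hPn _ j (Finset.notMem_empty j)]
  have hM' := hM (P {i0}) i0 j1 hij
  rw [hupd, hone, hempty] at hM'
  apply hM'
  rw [hPn _ j1 hj1n]
  exact mkOrd_top b a hab

lemma histRun_congr {n : ℕ} {M V : Type} (A : Fin n → SyncAlg n M V) (F F' : FPat n) :
    ∀ r, (∀ i j r', 1 ≤ r' → r' ≤ r → (F i j r' ↔ F' i j r')) →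
      ∀ i, histRun A F r i = histRun A F' r i := by
  intro r
  induction r with
  | zero => intro _ i; rfl
  | succ r ih =>
    intro h i
    have hr := ih (fun i j r' h1 h2 => h i j r' h1 (h2.trans (Nat.le_succ r)))
    simp only [histRun]
    rw [hr i]
    have : (fun j => if F j i (r+1) then ((A j).step (histRun A F r j)).1 i else none)
         = (fun j => if F' j i (r+1) then ((A j).step (histRun A F' r j)).1 i else none) := by
      funext j
      rw [hr j]
      exact if_congr (h j i (r+1) (by omega) le_rfl) rfl rfl
    rw [this]

/-- If colluders are not required to share the same most preferred value, then no
`(c,f)`-resilient consensus protocol exists for `c ≥ 2` (with `|V| ≥ 3`): every legal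
strategy profile admits a coalition of at most `c` agents and a deviation that keeps
the profile legal and strictly benefits some colluder in some valid failure pattern
and type profile. Moreover, if `f ≥ 1`, the deviation can be chosen so that
additionally no non-crashed colluder is worse off. -/
theorem stmt19 {V M : Type} [Fintype V] {n f c : ℕ}
    (hn : 2 ≤ n) (hV : 3 ≤ Fintype.card V) (hc : 2 ≤ c)
    (σ : Fin n → PrefOrd V → SyncAlg n M V) (hσ : Legal f σ) :
    (∃ (C : Finset (Fin n)) (τ : Fin n → (Fin n → PrefOrd V) → SyncAlg n M V),
      C.Nonempty ∧ C.card ≤ c ∧ DepOnlyOn C τ ∧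
      (∀ (F : FPat n) (θ : Fin n → PrefOrd V), ValidFP f F →
        ConsOK (devAlgs σ C τ θ) F θ) ∧
      ∃ (F : FPat n) (θ : Fin n → PrefOrd V),
        ValidFP f F ∧ ∃ i ∈ C, Benefits (algsOf σ θ) (devAlgs σ C τ θ) F θ i) ∧
    (1 ≤ f →
      ∃ (C : Finset (Fin n)) (τ : Fin n → (Fin n → PrefOrd V) → SyncAlg n M V),
        C.Nonempty ∧ C.card ≤ c ∧ DepOnlyOn C τ ∧
        (∀ (F : FPat n) (θ : Fin n → PrefOrd V), ValidFP f F →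
          ConsOK (devAlgs σ C τ θ) F θ) ∧
        ∃ (F : FPat n) (θ : Fin n → PrefOrd V),
          ValidFP f F ∧
          (∃ i ∈ C, Benefits (algsOf σ θ) (devAlgs σ C τ θ) F θ i) ∧
          (∀ j ∈ C, ¬ FCrashes F j →
            ∀ d d', Decides (algsOf σ θ) F j d → Decides (devAlgs σ C τ θ) F j d' →
              d = d' ∨ (θ j).val d d')) := by
  classical
  have hn1 : 0 < n := by omega
  set F0 : FPat n := fun _ _ _ => True with hF0
  have hvF0 : ValidFP f F0 := by
    constructor
    · intro i j r h
      exact absurd trivial h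
    · have he : {i : Fin n | FCrashes F0 i} = ∅ := by
        ext i; simp [FCrashes, hF0]
      rw [he, Set.ncard_empty]; omega
  set i0 : Fin n := ⟨0, hn1⟩ with hi0
  have hterm : ∀ θ : Fin n → PrefOrd V, ∃ v, Decides (algsOf σ θ) F0 i0 v := by
    intro θ
    exact (hσ F0 θ hvF0).1 i0 (fun j r _ => trivial)
  set g : (Fin n → PrefOrd V) → V := fun θ => (hterm θ).choose with hg
  have hgdec : ∀ θ, Decides (algsOf σ θ) F0 i0 (g θ) := fun θ => (hterm θ).choose_spec
  have hagree : ∀ θ i v, Decides (algsOf σ θ) F0 i v → v = g θ := by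
    intro θ i v hv
    exact (hσ F0 θ hvF0).2.1 i i0 v (g θ) hv (hgdec θ)
  have hgval : ∀ θ, ∃ j, PrefTop (θ j) (g θ) :=
    fun θ => (hσ F0 θ hvF0).2.2 i0 (g θ) (hgdec θ)
  obtain ⟨θ₀, p, q, hpq, hben⟩ := exists_manip hn (by omega) g hgval
  set θ₁ := Function.update θ₀ p (θ₀ q) with hθ₁
  set C : Finset (Fin n) := {p, q} with hC
  have hqC : q ∈ C := by rw [hC]; exact Finset.mem_insert_of_mem (Finset.mem_singleton_self q)
  set τ : Fin n → (Fin n → PrefOrd V) → SyncAlg n M V := fun i θ => σ i (θ q) with hτ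
  have hdev : ∀ θ : Fin n → PrefOrd V,
      devAlgs σ C τ θ = algsOf σ (Function.update θ p (θ q)) := by
    intro θ
    funext i
    by_cases hi : i ∈ C
    · rcases Finset.mem_insert.mp (hC ▸ hi) with h | h
      · subst h
        simp [devAlgs, hi, algsOf, hτ, Function.update_self]
      · have h' : i = q := Finset.mem_singleton.mp h
        subst h'
        simp [devAlgs, hi, algsOf, hτ, Function.update_of_ne (Ne.symm hpq)]
    · have hip : i ≠ p := by
        intro h; exact hi (by rw [hC, h]; exact Finset.mem_insert_self _ _)
      simp [devAlgs, hi, algsOf, Function.update_of_ne hip]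
  have hlegal' : ∀ (F : FPat n) (θ : Fin n → PrefOrd V), ValidFP f F →
      ConsOK (devAlgs σ C τ θ) F θ := by
    intro F θ hF
    rw [hdev θ]
    obtain ⟨h1, h2, h3⟩ := hσ F (Function.update θ p (θ q)) hF
    refine ⟨h1, h2, fun i v hv => ?_⟩
    obtain ⟨j, hj⟩ := h3 i v hv
    by_cases hjp : j = p
    · exact ⟨q, by rwa [hjp, Function.update_self] at hj⟩
    · exact ⟨j, by rwa [Function.update_of_ne hjp] at hj⟩
  have hCne : C.Nonempty := ⟨q, hqC⟩
  have hCcard : C.card ≤ c := by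
    have h2 : C.card ≤ 2 := by
      rw [hC]
      exact (Finset.card_insert_le _ _).trans (by simp)
    omega
  have hdep : DepOnlyOn C τ := by
    intro i _ θ θ' h
    simp only [hτ]
    rw [h q hqC]
  have hqcor : FCorrect F0 q := fun _ _ _ => trivial
  obtain ⟨v, hv⟩ := (hσ F0 θ₀ hvF0).1 q hqcor
  have hv0 : Decides (algsOf σ θ₀) F0 q (g θ₀) := (hagree θ₀ q v hv) ▸ hv
  obtain ⟨w, hw⟩ := (hσ F0 θ₁ hvF0).1 q hqcor
  have hv1 : Decides (algsOf σ θ₁) F0 q (g θ₁) := (hagree θ₁ q w hw) ▸ hw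
  have hnoCrash0 : ¬ FCrashes F0 q := by
    rintro ⟨j, r, _, h2⟩
    exact h2 trivial
  constructor
  · refine ⟨C, τ, hCne, hCcard, hdep, hlegal', F0, θ₀, hvF0, q, hqC, ?_⟩
    refine ⟨hnoCrash0, hlegal' F0 θ₀ hvF0, g θ₀, g θ₁, hv0, ?_, hben⟩
    rw [hdev θ₀, ← hθ₁]
    exact hv1
  · intro hf
    obtain ⟨r0, ha0, hd0⟩ := hv0
    obtain ⟨r1, ha1, hd1⟩ := hv1
    set T := max r0 r1 with hT
    set F1 : FPat n := fun i _ r => i = p → r ≤ T with hF1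
    have hvF1 : ValidFP f F1 := by
      constructor
      · intro i j r hr j' r' hlt hF
        exact hr (fun hip => le_trans (Nat.le_of_lt hlt) (hF hip))
      · have he : {i : Fin n | FCrashes F1 i} = {p} := by
          ext i
          simp only [Set.mem_setOf_eq, Set.mem_singleton_iff, FCrashes, hF1]
          constructor
          · rintro ⟨j, r, h1, h2⟩
            by_contra hip
            exact h2 (fun h => absurd h hip)
          · rintro rfl
            exact ⟨q, T + 1, by omega, fun hcon => absurd (hcon rfl) (by omega)⟩
        rw [he, Set.ncard_singleton]
        exact hf
    have hq_ne_p : q ≠ p := Ne.symm hpq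
    have hdecEq : ∀ (A : Fin n → SyncAlg n M V) i r, r ≤ T →
        decAt A F1 i r = decAt A F0 i r := by
      intro A i r hr
      unfold decAt
      rw [histRun_congr A F1 F0 r
        (fun i j r' _ h2 => iff_of_true (fun _ => le_trans h2 hr) trivial) i]
    have hAlive : ∀ r, AliveEnd F1 q r :=
      fun r j r' _ _ => fun h => absurd h hq_ne_p
    have hDq0 : Decides (algsOf σ θ₀) F1 q (g θ₀) :=
      ⟨r0, hAlive r0, by rw [hdecEq _ q r0 (le_max_left _ _)]; exact hd0⟩
    have hDq1 : Decides (algsOf σ θ₁) F1 q (g θ₁) :=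
      ⟨r1, hAlive r1, by rw [hdecEq _ q r1 (le_max_right _ _)]; exact hd1⟩
    have hDq1' : Decides (devAlgs σ C τ θ₀) F1 q (g θ₁) := by
      rw [hdev θ₀, ← hθ₁]; exact hDq1
    have hnoCrash1 : ¬ FCrashes F1 q := by
      rintro ⟨j, r, _, h2⟩
      exact h2 (fun h => absurd h hq_ne_p)
    refine ⟨C, τ, hCne, hCcard, hdep, hlegal', F1, θ₀, hvF1, ⟨q, hqC, ?_⟩, ?_⟩
    · exact ⟨hnoCrash1, hlegal' F1 θ₀ hvF1, g θ₀, g θ₁, hDq0, hDq1', hben⟩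
    · intro j hjC hjnc d d' hd hd'
      have hjq : j = q := by
        rcases Finset.mem_insert.mp (hC ▸ hjC) with h | h
        · exfalso
          apply hjnc
          subst h
          exact ⟨q, T + 1, by omega, fun hcon => absurd (hcon rfl) (by omega)⟩
        · exact Finset.mem_singleton.mp h
      subst hjq
      right
      have h1 := (hσ F1 θ₀ hvF1).2.1 j j d (g θ₀) hd hDq0
      have h2 := (hlegal' F1 θ₀ hvF1).2.1 j j d' (g θ₁) hd' hDq1'
      rw [h1, h2]
      exact hben
end
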